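/- Let W ≥ 1 and E₀, F₀ > 0 be real numbers. Let h : ℂ → ℂ be continuous on the closed strip {s : −1/4 ≤ Re s ≤ 5/4}, holomorphic on the open strip {s : −1/4 < Re s < 5/4}, and satisfy a growth bound |h(s)| ≤ A·exp(B·exp(γ·|Im s|)) on the closed strip for some constants A, B ≥ 0 and 0 < γ < 2π/3. Suppose that for all t ∈ ℝ one has |h(5/4+it)| ≤ F₀ and |h(−1/4+it)| ≤ E₀·W³·|1+it|³. Then there is a constant C, depending only on E₀ and F₀, such that for all σ with −1/4 < σ < 5/4 and all t ∈ ℝ, |h(σ+it)| ≤ C·W^{2(5/4−σ)}·(3+|t|)^{2(5/4−σ)}. -/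

import Mathlib

open Real Set

lemma aux_arcsin_le {u : ℝ} (h0 : 0 ≤ u) (h1 : u ≤ 1) : Real.arcsin u ≤ π / 2 * u := by
  have hs : Real.sin (Real.arcsin u) = u := Real.sin_arcsin (by linarith) h1
  have h2 := Real.mul_le_sin (Real.arcsin_nonneg.2 h0) (Real.arcsin_le_pi_div_two u)
  rw [hs] at h2
  have hπ : (0:ℝ) < π := Real.pi_pos
  have h3 : 2 * Real.arcsin u ≤ π * u := by
    have := mul_le_mul_of_nonneg_left h2 hπ.le
    field_simp at this
    linarith
  linarith

lemma aux_abs_arcsin (v : ℝ) : |Real.arcsin v| = Real.arcsin |v| := by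
  rcases le_or_gt 0 v with hv | hv
  · rw [abs_of_nonneg hv, abs_of_nonneg (Real.arcsin_nonneg.2 hv)]
  · rw [abs_of_neg hv, abs_of_neg (Real.arcsin_lt_zero.2 hv), ← Real.arcsin_neg]

lemma aux_abs_arg_le {z : ℂ} (hz : 0 < z.re) : |Complex.arg z| ≤ π / 2 * (|z.im| / z.re) := by
  have hz0 : z ≠ 0 := fun h => by simp [h] at hz
  have habs : 0 < ‖z‖ := norm_pos_iff.mpr hz0
  have hre : z.re ≤ ‖z‖ := Complex.re_le_norm z
  have him : |z.im| ≤ ‖z‖ := Complex.abs_im_le_norm z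
  rw [Complex.arg_of_re_nonneg hz.le, aux_abs_arcsin, abs_div, abs_of_pos habs]
  calc Real.arcsin (|z.im| / ‖z‖) ≤ π / 2 * (|z.im| / ‖z‖) :=
        aux_arcsin_le (by positivity) (by rw [div_le_one habs]; exact him)
    _ ≤ π / 2 * (|z.im| / z.re) := by gcongr

lemma lem_re4 (z : ℂ) : (4 - z ^ 2).re = 4 - (z.re * z.re - z.im * z.im) := by
  rw [sq, Complex.sub_re, Complex.mul_re]; norm_num

lemma lem_im4 (z : ℂ) : (4 - z ^ 2).im = -(z.re * z.im + z.im * z.re) := by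
  rw [sq, Complex.sub_im, Complex.mul_im]; norm_num

lemma lem_rebound {z : ℂ} (h1 : -(1/4) ≤ z.re) (h2 : z.re ≤ 5/4) :
    39/16 + z.im ^ 2 ≤ ‖4 - z ^ 2‖ := by
  have h3 : 39/16 + z.im ^ 2 ≤ (4 - z ^ 2).re := by rw [lem_re4]; nlinarith
  exact h3.trans (Complex.re_le_norm _)

lemma lem_upper {z : ℂ} (h1 : -(1/4) ≤ z.re) (h2 : z.re ≤ 5/4) :
    ‖4 - z ^ 2‖ ≤ (3 + |z.im|) ^ 2 := by
  have h3 : ‖4 - z ^ 2‖ ≤ 4 + ‖z ^ 2‖ := by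
    have := norm_sub_le (4:ℂ) (z ^ 2)
    simpa using this
  have h4 : ‖z ^ 2‖ = z.re ^ 2 + z.im ^ 2 := by
    rw [norm_pow, Complex.sq_norm, Complex.normSq_apply]; ring
  rw [h4] at h3
  have hx : z.re ^ 2 ≤ 25/16 := by nlinarith
  nlinarith [_root_.sq_abs z.im, abs_nonneg z.im]

lemma lem_lower16 {z : ℂ} (h1 : -(1/4) ≤ z.re) (h2 : z.re ≤ 5/4) :
    (3 + |z.im|) ^ 2 ≤ 16 * ‖4 - z ^ 2‖ := by
  have h3 := lem_rebound h1 h2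
  nlinarith [_root_.sq_abs z.im, abs_nonneg z.im, sq_nonneg (|z.im| - 1)]

lemma lem_imbound {z : ℂ} (h1 : -(1/4) ≤ z.re) (h2 : z.re ≤ 5/4) :
    |z.im * Complex.arg (4 - z ^ 2)| ≤ 4 := by
  have hDpos : 0 < (4 - z ^ 2).re := by rw [lem_re4]; nlinarith [sq_nonneg z.im]
  have hD : 39/16 + z.im ^ 2 ≤ (4 - z ^ 2).re := by rw [lem_re4]; nlinarith
  have harg := aux_abs_arg_le hDpos
  have hN : |(4 - z ^ 2).im| ≤ 5/2 * |z.im| := by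
    rw [lem_im4, abs_neg]
    calc |z.re * z.im + z.im * z.re| ≤ |z.re * z.im| + |z.im * z.re| := abs_add_le _ _
      _ = 2 * (|z.re| * |z.im|) := by rw [abs_mul, abs_mul]; ring
      _ ≤ 5/2 * |z.im| := by
          have : |z.re| ≤ 5/4 := abs_le.2 ⟨by linarith, h2⟩
          nlinarith [abs_nonneg z.im]
  have hπ : (0:ℝ) < π := Real.pi_pos
  calc |z.im * Complex.arg (4 - z ^ 2)| = |z.im| * |Complex.arg (4 - z ^ 2)| := abs_mul _ _
    _ ≤ |z.im| * (π / 2 * (|(4 - z ^ 2).im| / (4 - z ^ 2).re)) :=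
        mul_le_mul_of_nonneg_left harg (abs_nonneg _)
    _ = π / 2 * ((|z.im| * |(4 - z ^ 2).im|) / (4 - z ^ 2).re) := by ring
    _ ≤ π / 2 * (5/2) := by
        have hfrac : (|z.im| * |(4 - z ^ 2).im|) / (4 - z ^ 2).re ≤ 5/2 := by
          rw [div_le_iff₀ hDpos]
          have : |z.im| * |(4 - z ^ 2).im| ≤ |z.im| * (5/2 * |z.im|) :=
            mul_le_mul_of_nonneg_left hN (abs_nonneg _)
          nlinarith [_root_.sq_abs z.im, sq_nonneg z.im]
        exact mul_le_mul_of_nonneg_left hfrac (by positivity)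
    _ ≤ 4 := by have := Real.pi_lt_d2; linarith

lemma lem_Gabs {W : ℝ} (hW : 1 ≤ W) {z : ℂ} (h1 : -(1/4) ≤ z.re) (h2 : z.re ≤ 5/4) :
    ‖Complex.exp ((z - 5/4) *
        (((2 * Real.log W : ℝ) : ℂ) + Complex.log (2 - z) + Complex.log (2 + z)))‖ =
      (W ^ 2 * ‖4 - z ^ 2‖) ^ (z.re - 5/4) *
        Real.exp (-(z.im * Complex.arg (4 - z ^ 2))) := by
  have hW0 : (0:ℝ) < W := lt_of_lt_of_le one_pos hW
  have hmre : 0 < (2 - z).re := by simp only [Complex.sub_re]; norm_num; linarith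
  have hpre : 0 < (2 + z).re := by simp only [Complex.add_re]; norm_num; linarith
  have hmne : (2 - z) ≠ 0 := fun h => by rw [h] at hmre; simp at hmre
  have hpne : (2 + z) ≠ 0 := fun h => by rw [h] at hpre; simp at hpre
  have hprod : (2 - z) * (2 + z) = 4 - z ^ 2 := by ring
  have hargm := Complex.abs_arg_lt_pi_div_two_iff.2 (Or.inl hmre)
  have hargp := Complex.abs_arg_lt_pi_div_two_iff.2 (Or.inl hpre)
  have hπ := Real.pi_pos
  have hargsum : Complex.arg (2 - z) + Complex.arg (2 + z) = Complex.arg (4 - z ^ 2) := by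
    rw [← hprod, Complex.arg_mul hmne hpne]
    constructor
    · have := abs_lt.1 hargm; have := abs_lt.1 hargp; linarith
    · have := abs_lt.1 hargm; have := abs_lt.1 hargp; linarith
  have habsprod : ‖2 - z‖ * ‖2 + z‖ = ‖4 - z ^ 2‖ := by
    rw [← norm_mul, hprod]
  have habsm : 0 < ‖2 - z‖ := norm_pos_iff.mpr hmne
  have habsp : 0 < ‖2 + z‖ := norm_pos_iff.mpr hpne
  have habs4 : 0 < ‖4 - z ^ 2‖ := by rw [← habsprod]; positivity
  have hRpos : 0 < W ^ 2 * ‖4 - z ^ 2‖ := mul_pos (by positivity) habs4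
  set L : ℂ := ((2 * Real.log W : ℝ) : ℂ) + Complex.log (2 - z) + Complex.log (2 + z) with hL
  have hLre : L.re = Real.log (W ^ 2 * ‖4 - z ^ 2‖) := by
    simp only [hL, Complex.add_re, Complex.ofReal_re, Complex.log_re]
    rw [← habsprod, Real.log_mul (by positivity) (by positivity),
      Real.log_mul (ne_of_gt habsm) (ne_of_gt habsp), Real.log_pow]
    push_cast; ring
  have hLim : L.im = Complex.arg (4 - z ^ 2) := by
    simp only [hL, Complex.add_im, Complex.ofReal_im, Complex.log_im, zero_add, hargsum]
  have hzre : (z - 5/4 : ℂ).re = z.re - 5/4 := by simp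
  have hzim : (z - 5/4 : ℂ).im = z.im := by simp
  have hmulre : ((z - 5/4) * L).re = (z.re - 5/4) * Real.log (W ^ 2 * ‖4 - z ^ 2‖)
      - z.im * Complex.arg (4 - z ^ 2) := by
    rw [Complex.mul_re, hzre, hzim, hLre, hLim]
  rw [Complex.norm_exp, hmulre, Real.exp_sub, Real.rpow_def_of_pos hRpos,
    mul_comm (Real.log _), Real.exp_neg, div_eq_mul_inv]

lemma lem_Gdiff {W : ℝ} {z : ℂ} (h1 : -2 < z.re) (h2 : z.re < 2) :
    DifferentiableAt ℂ (fun z : ℂ => Complex.exp ((z - 5/4) *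
      (((2 * Real.log W : ℝ) : ℂ) + Complex.log (2 - z) + Complex.log (2 + z)))) z := by
  apply DifferentiableAt.cexp
  apply DifferentiableAt.mul
  · exact differentiableAt_id.sub (differentiableAt_const _)
  · apply DifferentiableAt.add
    apply DifferentiableAt.add
    · exact differentiableAt_const _
    · exact (Complex.differentiableAt_log (by
          rw [Complex.mem_slitPlane_iff]; left
          rw [Complex.sub_re]; norm_num; linarith)).comp z
        ((differentiableAt_const (2:ℂ)).sub differentiableAt_id)
    · exact (Complex.differentiableAt_log (by
          rw [Complex.mem_slitPlane_iff]; left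
          rw [Complex.add_re]; norm_num; linarith)).comp z
        ((differentiableAt_const (2:ℂ)).add differentiableAt_id)

lemma lem_sq_rpow {u : ℝ} (hu : 0 ≤ u) (e : ℝ) : (u ^ 2 : ℝ) ^ e = u ^ (2 * e) := by
  rw [← Real.rpow_natCast u 2, ← Real.rpow_mul hu]
  norm_num

lemma lem_cube {u : ℝ} (hu : 0 ≤ u) : (u ^ 2 : ℝ) ^ ((3:ℝ)/2) = u ^ 3 := by
  rw [lem_sq_rpow hu]
  norm_num




/-- Convexity estimate of Proposition 5.2: an abstract function `h` (playing the role of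
`ζ(2s)·R(f,g,s)`), bounded on the edges of the strip `-1/4 ≤ Re s ≤ 5/4` by a constant and by
`E₀·W³·|1+it|³` respectively, satisfies the interpolated bound
`|h(σ+it)| ≤ C·W^{2(5/4−σ)}·(3+|t|)^{2(5/4−σ)}` with `C` depending only on `E₀, F₀`. -/
theorem convexity_bound_abstract (E₀ F₀ : ℝ) (hE₀ : 0 < E₀) (hF₀ : 0 < F₀) :
    ∃ C : ℝ, ∀ (W : ℝ), 1 ≤ W → ∀ (h : ℂ → ℂ),
      ContinuousOn h {s : ℂ | -(1/4) ≤ s.re ∧ s.re ≤ 5/4} →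
      DifferentiableOn ℂ h {s : ℂ | -(1/4) < s.re ∧ s.re < 5/4} →
      ∀ (A B γ : ℝ), 0 ≤ A → 0 ≤ B → 0 < γ → γ < 2 * Real.pi / 3 →
      (∀ s : ℂ, -(1/4) ≤ s.re → s.re ≤ 5/4 →
        ‖h s‖ ≤ A * Real.exp (B * Real.exp (γ * |s.im|))) →
      (∀ t : ℝ, ‖h ((5/4 : ℂ) + t * Complex.I)‖ ≤ F₀) →
      (∀ t : ℝ, ‖h ((-(1/4) : ℂ) + t * Complex.I)‖ ≤
        E₀ * W ^ 3 * ‖1 + t * Complex.I‖ ^ 3) →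
      ∀ σ t : ℝ, -(1/4) < σ → σ < 5/4 →
        ‖h ((σ : ℂ) + t * Complex.I)‖ ≤
          C * W ^ (2 * (5/4 - σ)) * (3 + |t|) ^ (2 * (5/4 - σ)) := by
  refine ⟨Real.exp 8 * (F₀ + 64 * E₀), ?_⟩
  intro W hW h hc hd A B γ hA hB hγpos hγlt hgrow hER hEL σ t hσ1 hσ2
  have hW0 : (0:ℝ) < W := lt_of_lt_of_le one_pos hW
  set G : ℂ → ℂ := fun z => Complex.exp ((z - 5/4) *
    (((2 * Real.log W : ℝ) : ℂ) + Complex.log (2 - z) + Complex.log (2 + z))) with hGdef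
  have hGabs : ∀ z : ℂ, -(1/4) ≤ z.re → z.re ≤ 5/4 → ‖G z‖ =
      (W ^ 2 * ‖4 - z ^ 2‖) ^ (z.re - 5/4) *
        Real.exp (-(z.im * Complex.arg (4 - z ^ 2))) :=
    fun z h1 h2 => lem_Gabs hW h1 h2
  have hR1 : ∀ z : ℂ, -(1/4) ≤ z.re → z.re ≤ 5/4 →
      1 ≤ W ^ 2 * ‖4 - z ^ 2‖ := by
    intro z h1 h2
    have h3 := lem_rebound h1 h2
    nlinarith [sq_nonneg z.im, sq_nonneg W]
  have hexp4 : ∀ z : ℂ, -(1/4) ≤ z.re → z.re ≤ 5/4 →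
      Real.exp (-(z.im * Complex.arg (4 - z ^ 2))) ≤ Real.exp 4 := by
    intro z h1 h2
    have := abs_le.1 (lem_imbound h1 h2)
    exact Real.exp_le_exp.2 (by linarith [this.1, this.2])
  have hexp4' : ∀ z : ℂ, -(1/4) ≤ z.re → z.re ≤ 5/4 →
      Real.exp (-4) ≤ Real.exp (-(z.im * Complex.arg (4 - z ^ 2))) := by
    intro z h1 h2
    have := abs_le.1 (lem_imbound h1 h2)
    exact Real.exp_le_exp.2 (by linarith [this.1, this.2])
  -- Phragmen–Lindelöf for h * G
  have hPL : ∀ z : ℂ, -(1/4) ≤ z.re → z.re ≤ 5/4 →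
      ‖h z * G z‖ ≤ Real.exp 4 * (F₀ + 64 * E₀) := by
    intro z hz1 hz2
    refine PhragmenLindelof.vertical_strip (f := fun w => h w * G w) (a := -(1/4)) (b := 5/4)
      ?_ ?_ ?_ ?_ hz1 hz2
    · constructor
      · intro w hw
        have hw' : -(1/4) < w.re ∧ w.re < 5/4 := hw
        exact (hd w hw').mul
          ((lem_Gdiff (W := W) (by linarith [hw'.1]) (by linarith [hw'.2])).differentiableWithinAt)
      · have hsub : closure (Complex.re ⁻¹' Ioo (-(1/4)) (5/4)) ⊆
            Complex.re ⁻¹' Icc (-(1/4)) (5/4) :=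
          closure_minimal (preimage_mono Ioo_subset_Icc_self)
            (isClosed_Icc.preimage Complex.continuous_re)
        refine ContinuousOn.mono ?_ hsub
        refine ContinuousOn.mul hc ?_
        intro w hw
        have hw' : -(1/4) ≤ w.re ∧ w.re ≤ 5/4 := hw
        exact ((lem_Gdiff (W := W) (by linarith [hw'.1]) (by linarith [hw'.2])).continuousAt).continuousWithinAt
    · refine ⟨γ, ?_, B, ?_⟩
      · calc γ < 2 * π / 3 := hγlt
          _ = π / (5/4 - -(1/4)) := by ring
      · refine Asymptotics.IsBigO.of_bound (A * Real.exp 4) ?_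
        rw [Filter.eventually_inf_principal]
        refine Filter.Eventually.of_forall ?_
        intro w hw
        have hw' : -(1/4) < w.re ∧ w.re < 5/4 := hw
        have hb1 := hgrow w hw'.1.le hw'.2.le
        have hGb : ‖G w‖ ≤ Real.exp 4 := by
          rw [hGabs w hw'.1.le hw'.2.le]
          have e1 : (W ^ 2 * ‖4 - w ^ 2‖) ^ (w.re - 5/4) ≤ 1 :=
            Real.rpow_le_one_of_one_le_of_nonpos (hR1 w hw'.1.le hw'.2.le) (by linarith [hw'.2])
          calc (W ^ 2 * ‖4 - w ^ 2‖) ^ (w.re - 5/4) *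
                Real.exp (-(w.im * Complex.arg (4 - w ^ 2)))
              ≤ 1 * Real.exp 4 := mul_le_mul e1 (hexp4 w hw'.1.le hw'.2.le)
                (Real.exp_pos _).le zero_le_one
            _ = Real.exp 4 := one_mul _
        have hnorm : ‖Real.exp (B * Real.exp (γ * |w.im|))‖ =
            Real.exp (B * Real.exp (γ * |w.im|)) := by
          rw [Real.norm_eq_abs, abs_of_pos (Real.exp_pos _)]
        rw [hnorm, norm_mul]
        calc ‖h w‖ * ‖G w‖
            ≤ (A * Real.exp (B * Real.exp (γ * |w.im|))) * Real.exp 4 :=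
              mul_le_mul hb1 hGb (norm_nonneg _)
                (by positivity)
          _ = A * Real.exp 4 * Real.exp (B * Real.exp (γ * |w.im|)) := by ring
    · -- left edge re = -1/4
      intro w hw
      have hz1 : -(1/4) ≤ w.re := by rw [hw]
      have hz2 : w.re ≤ 5/4 := by rw [hw]; norm_num
      have hwform : w = (-(1/4) : ℂ) + (w.im : ℂ) * Complex.I := by
        apply Complex.ext <;> simp [hw]
      have hh := hEL w.im
      rw [← hwform] at hh
      have habs1 : ‖1 + (w.im : ℂ) * Complex.I‖ ≤ 3 + |w.im| := by
        calc ‖1 + (w.im : ℂ) * Complex.I‖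
            ≤ ‖1‖ + ‖(w.im : ℂ) * Complex.I‖ := norm_add_le _ _
          _ = 1 + |w.im| := by simp
          _ ≤ 3 + |w.im| := by linarith
      have hhle : ‖h w‖ ≤ E₀ * W ^ 3 * (3 + |w.im|) ^ 3 := by
        refine hh.trans ?_
        have h5 := pow_le_pow_left₀ (norm_nonneg _) habs1 3
        exact mul_le_mul_of_nonneg_left h5 (by positivity)
      set Rz := W ^ 2 * ‖4 - w ^ 2‖ with hRz
      have hRz1 : 1 ≤ Rz := hR1 w hz1 hz2
      have hRzpos : 0 < Rz := lt_of_lt_of_le one_pos hRz1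
      have hq : (W * (3 + |w.im|) / 4) ^ 2 ≤ Rz := by
        have h16 := lem_lower16 hz1 hz2
        have h17 := mul_le_mul_of_nonneg_left h16 (sq_nonneg W)
        have : (W * (3 + |w.im|) / 4) ^ 2 = W ^ 2 * (3 + |w.im|) ^ 2 / 16 := by ring
        rw [this, hRz]
        linarith
      have hu0 : (0:ℝ) ≤ W * (3 + |w.im|) / 4 := by positivity
      have hupos : (0:ℝ) < (W * (3 + |w.im|) / 4) ^ 3 := by positivity
      have hcube : (W * (3 + |w.im|) / 4) ^ 3 ≤ Rz ^ ((3:ℝ)/2) := by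
        calc (W * (3 + |w.im|) / 4) ^ 3 = ((W * (3 + |w.im|) / 4) ^ 2) ^ ((3:ℝ)/2) :=
              (lem_cube hu0).symm
          _ ≤ Rz ^ ((3:ℝ)/2) := Real.rpow_le_rpow (by positivity) hq (by norm_num)
      have hGle : ‖G w‖ ≤ ((W * (3 + |w.im|) / 4) ^ 3)⁻¹ * Real.exp 4 := by
        rw [hGabs w hz1 hz2]
        have he : w.re - 5/4 = -((3:ℝ)/2) := by rw [hw]; norm_num
        rw [he, ← hRz, Real.rpow_neg hRzpos.le]
        refine mul_le_mul ?_ (hexp4 w hz1 hz2) (Real.exp_pos _).le (by positivity)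
        exact inv_anti₀ hupos hcube
      have hfin : (E₀ * W ^ 3 * (3 + |w.im|) ^ 3) * (((W * (3 + |w.im|) / 4) ^ 3)⁻¹ * Real.exp 4)
          = 64 * E₀ * Real.exp 4 := by
        have h3 : (0:ℝ) < 3 + |w.im| := by positivity
        field_simp
        ring
      rw [norm_mul]
      calc ‖h w‖ * ‖G w‖
          ≤ (E₀ * W ^ 3 * (3 + |w.im|) ^ 3) *
              (((W * (3 + |w.im|) / 4) ^ 3)⁻¹ * Real.exp 4) :=
            mul_le_mul hhle hGle (norm_nonneg _) (by positivity)
        _ = 64 * E₀ * Real.exp 4 := hfin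
        _ ≤ Real.exp 4 * (F₀ + 64 * E₀) := by nlinarith [Real.exp_pos (4:ℝ)]
    · -- right edge re = 5/4
      intro w hw
      have hz1 : -(1/4) ≤ w.re := by rw [hw]; norm_num
      have hz2 : w.re ≤ 5/4 := by rw [hw]
      have hwform : w = (5/4 : ℂ) + (w.im : ℂ) * Complex.I := by
        apply Complex.ext <;> simp [hw]
      have hh := hER w.im
      rw [← hwform] at hh
      have hGle : ‖G w‖ ≤ Real.exp 4 := by
        rw [hGabs w hz1 hz2]
        have he : w.re - 5/4 = 0 := by rw [hw]; ring
        rw [he, Real.rpow_zero, one_mul]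
        exact hexp4 w hz1 hz2
      rw [norm_mul]
      calc ‖h w‖ * ‖G w‖ ≤ F₀ * Real.exp 4 :=
            mul_le_mul hh hGle (norm_nonneg _) hF₀.le
        _ ≤ Real.exp 4 * (F₀ + 64 * E₀) := by nlinarith [Real.exp_pos (4:ℝ)]
  -- conclude at z₀ = σ + t i
  set z₀ : ℂ := (σ : ℂ) + (t : ℂ) * Complex.I with hz₀
  have hre : z₀.re = σ := by simp [hz₀]
  have him : z₀.im = t := by simp [hz₀]
  have hz1 : -(1/4) ≤ z₀.re := by rw [hre]; exact hσ1.le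
  have hz2 : z₀.re ≤ 5/4 := by rw [hre]; exact hσ2.le
  have hFb := hPL z₀ hz1 hz2
  set Rz := W ^ 2 * ‖4 - z₀ ^ 2‖ with hRz
  have hRz1 : 1 ≤ Rz := hR1 z₀ hz1 hz2
  have hRzpos : 0 < Rz := lt_of_lt_of_le one_pos hRz1
  have hGlow : Rz ^ (σ - 5/4) * Real.exp (-4) ≤ ‖G z₀‖ := by
    rw [hGabs z₀ hz1 hz2, ← hRz, hre]
    exact mul_le_mul_of_nonneg_left (hexp4' z₀ hz1 hz2) (Real.rpow_nonneg hRzpos.le _)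
  have hGpos : 0 < ‖G z₀‖ := norm_pos_iff.mpr (Complex.exp_ne_zero _)
  have hlow_pos : 0 < Rz ^ (σ - 5/4) * Real.exp (-4) := by positivity
  have hkey : ‖h z₀‖ ≤ (Real.exp 4 * (F₀ + 64 * E₀)) /
      (Rz ^ (σ - 5/4) * Real.exp (-4)) := by
    rw [div_eq_mul_inv]
    have h1 : ‖h z₀‖ = ‖h z₀ * G z₀‖ / ‖G z₀‖ := by
      rw [norm_mul]
      field_simp
    rw [h1, div_eq_mul_inv]
    refine mul_le_mul hFb ?_ (by positivity) (by positivity)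
    exact inv_anti₀ hlow_pos hGlow
  have h2 : (Rz ^ (σ - 5/4))⁻¹ = Rz ^ ((5:ℝ)/4 - σ) := by
    rw [← Real.rpow_neg hRzpos.le]
    norm_num
  have h4 : (Real.exp (-4 : ℝ))⁻¹ = Real.exp 4 := by
    rw [← Real.exp_neg]; norm_num
  have h3 : Real.exp 4 * Real.exp 4 = Real.exp 8 := by
    rw [← Real.exp_add]; norm_num
  have hsimp : (Real.exp 4 * (F₀ + 64 * E₀)) / (Rz ^ (σ - 5/4) * Real.exp (-4)) =
      Real.exp 8 * (F₀ + 64 * E₀) * Rz ^ ((5:ℝ)/4 - σ) := by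
    rw [div_eq_mul_inv, mul_inv, h2, h4, ← h3]
    ring
  have hup : Rz ≤ W ^ 2 * (3 + |t|) ^ 2 := by
    have h5 := lem_upper hz1 hz2
    rw [him] at h5
    exact mul_le_mul_of_nonneg_left h5 (sq_nonneg W)
  have hee : (0:ℝ) ≤ 5/4 - σ := by linarith
  have hrp : Rz ^ ((5:ℝ)/4 - σ) ≤ (W ^ 2 * (3 + |t|) ^ 2) ^ ((5:ℝ)/4 - σ) :=
    Real.rpow_le_rpow hRzpos.le hup hee
  have hsplit : (W ^ 2 * (3 + |t|) ^ 2) ^ ((5:ℝ)/4 - σ) =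
      W ^ (2 * (5/4 - σ)) * (3 + |t|) ^ (2 * (5/4 - σ)) := by
    rw [← mul_pow, lem_sq_rpow (by positivity), Real.mul_rpow hW0.le (by positivity)]
  calc ‖h z₀‖ ≤ (Real.exp 4 * (F₀ + 64 * E₀)) /
        (Rz ^ (σ - 5/4) * Real.exp (-4)) := hkey
    _ = Real.exp 8 * (F₀ + 64 * E₀) * Rz ^ ((5:ℝ)/4 - σ) := hsimp
    _ ≤ Real.exp 8 * (F₀ + 64 * E₀) * ((W ^ 2 * (3 + |t|) ^ 2) ^ ((5:ℝ)/4 - σ)) :=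
        mul_le_mul_of_nonneg_left hrp (by positivity)
    _ = Real.exp 8 * (F₀ + 64 * E₀) * W ^ (2 * (5/4 - σ)) * (3 + |t|) ^ (2 * (5/4 - σ)) := by
        rw [hsplit]; ring
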